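/- Let (C, ∂) be a free, finitely generated chain complex over S = 𝔽₂[U] and let B = (e_i)_{i∈I} be a basis of C. Then Φ_B satisfies the identity Φ_B = ∂ ∘ (d/dU)_B + (d/dU)_B ∘ ∂, where (d/dU)_B : C → C is the 𝔽₂-linear (not S-linear) map defined by writing x = Σ_i q_i e_i with q_i ∈ S and setting (d/dU)_B(x) = Σ_i q_i′ e_i. In particular Φ_B is a chain map: ∂ ∘ Φ_B = Φ_B ∘ ∂. (Identities established in Section 3.2 of the paper.) -/

import Mathlib

noncomputable section

abbrev F2 : Type := ZMod 2

abbrev S2 : Type := Polynomial F2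

def Phi {C ι : Type} [AddCommGroup C] [Module S2 C] (B : Module.Basis ι S2 C)
    (d : C →ₗ[S2] C) : C →ₗ[S2] C :=
  B.constr S2 fun i => (B.repr (d (B i))).sum fun j p => (Polynomial.derivative p) • B j

def derivB {C ι : Type} [AddCommGroup C] [Module S2 C] (B : Module.Basis ι S2 C) (x : C) : C :=
  (B.repr x).sum fun i q => (Polynomial.derivative q) • B i

lemma derivB_add {C ι : Type} [AddCommGroup C] [Module S2 C] (B : Module.Basis ι S2 C)
    (x y : C) : derivB B (x + y) = derivB B x + derivB B y := by
  classical
  unfold derivB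
  rw [map_add, Finsupp.sum_add_index]
  · intro i _; simp
  · intro i _ p q; simp [add_smul]

lemma derivB_smul {C ι : Type} [AddCommGroup C] [Module S2 C] (B : Module.Basis ι S2 C)
    (q : S2) (x : C) :
    derivB B (q • x) = Polynomial.derivative q • x + q • derivB B x := by
  unfold derivB
  rw [map_smul, Finsupp.sum_smul_index (fun i => by simp)]
  have h : ((B.repr x).sum fun i c => (Polynomial.derivative (q * c)) • B i)
      = (B.repr x).sum fun i c =>
        Polynomial.derivative q • (c • B i) + q • ((Polynomial.derivative c) • B i) := by
    apply Finsupp.sum_congr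
    intro i _
    rw [Polynomial.derivative_mul, add_smul, smul_smul, smul_smul]
  rw [h, Finsupp.sum_add]
  congr 1
  · rw [← Finsupp.smul_sum]
    congr 1
    conv_rhs => rw [← B.linearCombination_repr x]
    rw [Finsupp.linearCombination_apply]
  · rw [← Finsupp.smul_sum]

lemma derivB_basis {C ι : Type} [AddCommGroup C] [Module S2 C] (B : Module.Basis ι S2 C)
    (i : ι) : derivB B (B i) = 0 := by
  unfold derivB
  rw [Module.Basis.repr_self, Finsupp.sum_single_index] <;> simp

def Fmap {C ι : Type} [AddCommGroup C] [Module S2 C] (B : Module.Basis ι S2 C)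
    (d : C →ₗ[S2] C) : C →ₗ[S2] C where
  toFun x := d (derivB B x) + derivB B (d x)
  map_add' x y := by
    rw [derivB_add, map_add, map_add, derivB_add]; abel
  map_smul' q x := by
    simp only [RingHom.id_apply, map_smul, derivB_smul, map_add]
    have h2 : (Polynomial.derivative q) • d x + (Polynomial.derivative q) • d x = 0 := by
      rw [← add_smul]
      have : Polynomial.derivative q + Polynomial.derivative q = 0 := by
        rw [CharTwo.add_self_eq_zero]
      rw [this, zero_smul]
    rw [smul_add, add_add_add_comm, h2, zero_add]

theorem Phi_eq_comm_d_derivB_and_chain_map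
    {C ι : Type} [AddCommGroup C] [Module S2 C] [Fintype ι]
    (B : Module.Basis ι S2 C) (d : C →ₗ[S2] C) (hd : d ∘ₗ d = 0) :
    (∀ x : C, Phi B d x = d (derivB B x) + derivB B (d x)) ∧
      d ∘ₗ Phi B d = Phi B d ∘ₗ d := by
  have key : Phi B d = Fmap B d := by
    apply Module.Basis.ext B
    intro i
    show _ = d (derivB B (B i)) + derivB B (d (B i))
    rw [derivB_basis, map_zero, zero_add]
    unfold Phi
    rw [Module.Basis.constr_basis]
    rfl
  have hpt : ∀ x : C, Phi B d x = d (derivB B x) + derivB B (d x) := fun x => by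
    rw [key]; rfl
  refine ⟨hpt, ?_⟩
  have hdd : ∀ y : C, d (d y) = 0 := fun y => congrFun (congrArg DFunLike.coe hd) y
  ext x
  have h0 : derivB B (0 : C) = 0 := by simp [derivB]
  simp only [LinearMap.comp_apply, hpt, map_add, hdd, h0, map_zero, zero_add, add_zero]

end
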